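/- (Rump's correspondence, one direction) Let (X,·) be a non-degenerate cycle set, and for y, x ∈ X define y * x = φ_y⁻¹(x) (so that x = y·z if and only if z = y * x). Define r : X × X → X × X by r(x,y) = ((y * x)·y, y * x). Then (X,r) is a solution: r is bijective, r ∘ r = id, r satisfies the braid relation (r × id) ∘ (id × r) ∘ (r × id) = (id × r) ∘ (r × id) ∘ (id × r), and writing r(x,y) = (σ_x(y), τ_y(x)), all the maps σ_x and τ_y are bijective. -/

import Mathlib

/-- The map `r × id` on `X × X × X`. -/
def r12 {X : Type*} (r : X × X → X × X) : X × X × X → X × X × X :=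
  fun p => ((r (p.1, p.2.1)).1, (r (p.1, p.2.1)).2, p.2.2)

/-- The map `id × r` on `X × X × X`. -/
def r23 {X : Type*} (r : X × X → X × X) : X × X × X → X × X × X :=
  fun p => (p.1, r p.2)

/-- The braid relation `(r × id) ∘ (id × r) ∘ (r × id) = (id × r) ∘ (r × id) ∘ (id × r)`. -/
def YangBaxter {X : Type*} (r : X × X → X × X) : Prop :=
  r12 r ∘ r23 r ∘ r12 r = r23 r ∘ r12 r ∘ r23 r

/-- (Rump's correspondence) Let `X` be a non-degenerate cycle set with
`x · y = φ x y` and set `y * x = (φ y)⁻¹ x`. Then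
`r (x, y) = ((y * x) · y, y * x)` is a non-degenerate involutive
set-theoretic solution to the Yang–Baxter equation. -/
theorem stmt_17 {X : Type*} (φ : X → Equiv.Perm X)
    (hcs : ∀ x y z : X, φ (φ x y) (φ x z) = φ (φ y x) (φ y z))
    (hnd : Function.Bijective (fun x : X => φ x x))
    (r : X × X → X × X)
    (hr : ∀ x y : X, r (x, y) = (φ ((φ y)⁻¹ x) y, (φ y)⁻¹ x)) :
    Function.Bijective r ∧
    Function.Involutive r ∧
    YangBaxter r ∧
    (∀ x : X, Function.Bijective (fun y : X => (r (x, y)).1)) ∧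
    (∀ y : X, Function.Bijective (fun x : X => (r (x, y)).2)) := by
  -- Key identity: T (φ a b) = φ (φ b a) (T b) where T x = φ x x.
  have hK : ∀ a b : X, φ (φ a b) (φ a b) = φ (φ b a) (φ b b) := fun a b => hcs a b b
  have hinv : Function.Involutive r := by
    rintro ⟨x, y⟩
    rw [hr, hr]
    simp
  refine ⟨hinv.bijective, hinv, ?_, ?_, ?_⟩
  · -- Yang–Baxter
    unfold YangBaxter
    funext p
    obtain ⟨x, y, z⟩ := p
    obtain ⟨c, rfl⟩ : ∃ c, φ z c = y := ⟨(φ z)⁻¹ y, by simp⟩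
    obtain ⟨d, rfl⟩ : ∃ d, φ (φ z c) (φ z d) = x := ⟨(φ z)⁻¹ ((φ (φ z c))⁻¹ x), by simp⟩
    simp only [r12, r23, Function.comp_apply, hr, Equiv.Perm.coe_inv, Equiv.symm_apply_apply]
    rw [hcs z d c, hcs z c d]
    simp only [Equiv.Perm.coe_inv, Equiv.symm_apply_apply]
    rw [hcs d c z]
  · -- σ_x bijective
    intro x
    simp only [hr]
    constructor
    · intro y y' h
      have h2 : φ (φ ((φ y)⁻¹ x) y) (φ ((φ y)⁻¹ x) y) =
          φ (φ ((φ y')⁻¹ x) y') (φ ((φ y')⁻¹ x) y') := by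
        simp only at h; rw [h]
      rw [hK ((φ y)⁻¹ x) y, hK ((φ y')⁻¹ x) y'] at h2
      simp only [Equiv.Perm.coe_inv, Equiv.apply_symm_apply] at h2
      exact hnd.injective ((φ x).injective h2)
    · intro z
      obtain ⟨w, hw⟩ := hnd.surjective ((φ x)⁻¹ (φ z z))
      refine ⟨w, hnd.injective ?_⟩
      show φ (φ ((φ w)⁻¹ x) w) (φ ((φ w)⁻¹ x) w) = φ z z
      rw [hK ((φ w)⁻¹ x) w]
      simp only [Equiv.Perm.coe_inv, Equiv.apply_symm_apply]
      simp only at hw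
      rw [hw]
      simp
  · -- τ_y bijective
    intro y
    simp only [hr]
    exact (φ y)⁻¹.bijective
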